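/- For every real t there exists an angle θ ∈ ℝ such that all three vertices P₁(t), P₂(t), P₃(t) lie on the ellipse centered at X₁ = (2d, 0) obtained by rotating {(u, v) : u²/(R + d)² + v²/(R − d)² = 1} by θ; explicitly, for each i, writing uᵢ = cos θ·(Pᵢ(t)ₓ − 2d) + sin θ·Pᵢ(t)_y and vᵢ = −sin θ·(Pᵢ(t)ₓ − 2d) + cos θ·Pᵢ(t)_y, one has uᵢ²/(R + d)² + vᵢ²/(R − d)² = 1. In particular the circumconic of the poristic triangle centered at the incenter has semiaxis lengths R + d and R − d, independent of t. -/

import Mathlib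

noncomputable section

/-- Inradius determined by Euler's relation: `r = (R² − d²)/(2R)`. -/
def rIn (R d : ℝ) : ℝ := (R ^ 2 - d ^ 2) / (2 * R)

/-- `ω = √(R² − (d cos t + r)²)`. -/
def om (R d t : ℝ) : ℝ := Real.sqrt (R ^ 2 - (d * Real.cos t + rIn R d) ^ 2)

/-- Vertices `P₁(t), P₂(t), P₃(t)` of the poristic triangle
(circumcircle centered at `X₃ = (d,0)` with radius `R`,
incircle centered at `X₁ = (2d,0)` with radius `r`). -/
def Pv (R d t : ℝ) : Fin 3 → ℝ × ℝ :=
  ![(Real.cos t * (d * Real.cos t + rIn R d) - om R d t * Real.sin t + d,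
     (d * Real.cos t + rIn R d) * Real.sin t + om R d t * Real.cos t),
    (Real.cos t * (d * Real.cos t + rIn R d) + om R d t * Real.sin t + d,
     (d * Real.cos t + rIn R d) * Real.sin t - om R d t * Real.cos t),
    (R * (2 * d * R - (R ^ 2 + d ^ 2) * Real.cos t) /
       (R ^ 2 - 2 * d * R * Real.cos t + d ^ 2) + d,
     R * (d ^ 2 - R ^ 2) * Real.sin t /
       (R ^ 2 - 2 * d * R * Real.cos t + d ^ 2))]

/-- Coefficient of `x` in the excentral sideline `ℓᵢ'(t)`. -/
def lineA (R d t : ℝ) : Fin 3 → ℝ :=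
  ![(d * Real.sin t - om R d t) * Real.sin t - rIn R d * Real.cos t,
    (d * Real.sin t + om R d t) * Real.sin t - rIn R d * Real.cos t,
    R * Real.cos t - d]

/-- Coefficient of `y` in the excentral sideline `ℓᵢ'(t)`. -/
def lineB (R d t : ℝ) : Fin 3 → ℝ :=
  ![-((d * Real.cos t + rIn R d) * Real.sin t - om R d t * Real.cos t),
    -((d * Real.cos t + rIn R d) * Real.sin t + om R d t * Real.cos t),
    R * Real.sin t]

/-- Constant coefficient in the excentral sideline `ℓᵢ'(t)`. -/
def lineC (R d t : ℝ) : Fin 3 → ℝ :=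
  ![R ^ 2 - d ^ 2, R ^ 2 - d ^ 2, -(2 * d * R * Real.cos t) + R ^ 2 + d ^ 2]

set_option maxHeartbeats 2000000 in
set_option maxRecDepth 100000 in
/-- the three poristic vertices lie on an ellipse centered at the
incenter `X₁ = (2d,0)`, obtained by rotating the ellipse with semiaxes
`R + d` and `R − d` by some angle `θ`. -/
theorem incenter_circumconic_axes (R d : ℝ) (hd : 0 < d) (hdR : d < R) (t : ℝ) :
    ∃ θ : ℝ, ∀ i : Fin 3,
      (Real.cos θ * ((Pv R d t i).1 - 2 * d) + Real.sin θ * (Pv R d t i).2) ^ 2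
          / (R + d) ^ 2
        + (-Real.sin θ * ((Pv R d t i).1 - 2 * d) + Real.cos θ * (Pv R d t i).2) ^ 2
          / (R - d) ^ 2 = 1 := by
  have hR : (0:ℝ) < R := hd.trans hdR
  have hR0 : R ≠ 0 := ne_of_gt hR
  have hRd : (R + d) ≠ 0 := by positivity
  have hRd' : (R - d) ≠ 0 := ne_of_gt (sub_pos.mpr hdR)
  set c := Real.cos t with hc
  set s := Real.sin t with hsd
  set w := om R d t with hwdef
  have hrr : rIn R d = (R^2 - d^2)/(2*R) := rfl
  have hs : s ^ 2 = 1 - c ^ 2 := Real.sin_sq t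
  have hc1 : c ≤ 1 := Real.cos_le_one t
  have hc2 : -1 ≤ c := Real.neg_one_le_cos t
  have hD : 0 < R ^ 2 + d ^ 2 - 2 * d * R * c := by
    nlinarith [mul_pos hd hR, mul_pos (sub_pos.mpr hdR) (sub_pos.mpr hdR)]
  have hDne : R ^ 2 + d ^ 2 - 2 * d * R * c ≠ 0 := ne_of_gt hD
  have hDne2 : R ^ 2 - 2 * d * R * c + d ^ 2 ≠ 0 := by
    intro h; exact hDne (by linarith)
  have hq : 2 * R * (d * c + rIn R d) = 2 * R * d * c + R ^ 2 - d ^ 2 := by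
    rw [hrr]; field_simp; ring
  have hrad : 0 < R ^ 2 - (d * c + rIn R d) ^ 2 := by
    have h1 : (2 * R * (d * c + rIn R d)) ^ 2 < (2 * R) ^ 2 * R ^ 2 := by
      rw [hq]
      have hu1 : 0 < 2*R^2 - (2*R*d*c + R^2 - d^2) := by
        nlinarith [mul_nonneg (mul_nonneg hd.le hR.le) (sub_nonneg.mpr hc1),
          mul_pos (sub_pos.mpr hdR) (sub_pos.mpr hdR)]
      have hu2 : 0 < 2*R^2 + (2*R*d*c + R^2 - d^2) := by
        nlinarith [mul_nonneg (mul_nonneg hd.le hR.le) (by linarith : (0:ℝ) ≤ c + 1),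
          mul_pos (by linarith : (0:ℝ) < 3*R + d) (sub_pos.mpr hdR)]
      nlinarith [mul_pos hu1 hu2]
    nlinarith [h1, mul_pos hR hR, sq_nonneg (d * c + rIn R d)]
  have hw2 : w ^ 2 = R ^ 2 - (d * c + rIn R d) ^ 2 := by
    rw [hwdef]; unfold om; rw [← hc]; exact Real.sq_sqrt hrad.le
  have hW : (2*R*w) ^ 2 = 4*R^4 - (2*R*d*c + R^2 - d^2) ^ 2 := by
    linear_combination (4*R^2) * hw2 - (2*R*(d*c + rIn R d) + (2*R*d*c + R^2 - d^2)) * hq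
  have hG1 : (R^2+d^2)*((c*(d*c + rIn R d) - w*s + d - 2*d)^2+((d*c + rIn R d)*s + w*c)^2) - 2*d*R*((R^2*(4*c^3 - 3*c) - 2*d*R*(2*c^2 - 1) + d^2*c)/(R^2+d^2-2*d*R*c))*((c*(d*c + rIn R d) - w*s + d - 2*d)^2-((d*c + rIn R d)*s + w*c)^2) - 4*d*R*(s*(R^2*(4*c^2 - 1) - 4*d*R*c + d^2)/(R^2+d^2-2*d*R*c))*((c*(d*c + rIn R d) - w*s + d - 2*d)*((d*c + rIn R d)*s + w*c)) = (R^2-d^2)^2 := by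
    rw [hrr]
    have e1 : R ^ 2 + d ^ 2 - R * d * c * 2 ≠ 0 := by intro h; exact hDne (by linarith)
    have e2 : R * (R - d * 2 * c) + d ^ 2 ≠ 0 := by intro h; exact hDne (by linarith)
    have e3 : R ^ 2 + d ^ 2 - R * d * 2 * c ≠ 0 := by intro h; exact hDne (by linarith)
    field_simp
    linear_combination ((1)*d^8 + (-8)*R*d^7*c + (4)*R^2*d^4*w^2 + (-8)*R^2*d^5*s*w + (-4)*R^2*d^6 + (28)*R^2*d^6*c^2 + (48)*R^3*d^4*c*s*w + (32)*R^3*d^5*c + (-56)*R^3*d^5*c^3 + (-8)*R^4*d^2*w^2 + (-32)*R^4*d^2*c^2*w^2 + (16)*R^4*d^3*s*w + (-96)*R^4*d^3*c^2*s*w + (6)*R^4*d^4 + (-88)*R^4*d^4*c^2 + (64)*R^4*d^4*c^4 + (32)*R^5*d*c^3*w^2 + (-48)*R^5*d^2*c*s*w + (64)*R^5*d^2*c^3*s*w + (-24)*R^5*d^3*c + (96)*R^5*d^3*c^3 + (-32)*R^5*d^3*c^5 + (4)*R^6*w^2 + (-8)*R^6*d*s*w + (32)*R^6*d*c^2*s*w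 + (-4)*R^6*d^2 + (28)*R^6*d^2*c^2 + (-32)*R^6*d^2*c^4 + (-8)*R^7*d*c^3 + (1)*R^8) * hs + ((1)*d^4 + (-2)*R^2*d^2 + (1)*R^4) * hW
  have hG2 : (R^2+d^2)*((c*(d*c + rIn R d) + w*s + d - 2*d)^2+((d*c + rIn R d)*s - w*c)^2) - 2*d*R*((R^2*(4*c^3 - 3*c) - 2*d*R*(2*c^2 - 1) + d^2*c)/(R^2+d^2-2*d*R*c))*((c*(d*c + rIn R d) + w*s + d - 2*d)^2-((d*c + rIn R d)*s - w*c)^2) - 4*d*R*(s*(R^2*(4*c^2 - 1) - 4*d*R*c + d^2)/(R^2+d^2-2*d*R*c))*((c*(d*c + rIn R d) + w*s + d - 2*d)*((d*c + rIn R d)*s - w*c)) = (R^2-d^2)^2 := by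
    rw [hrr]
    have e1 : R ^ 2 + d ^ 2 - R * d * c * 2 ≠ 0 := by intro h; exact hDne (by linarith)
    have e2 : R * (R - d * 2 * c) + d ^ 2 ≠ 0 := by intro h; exact hDne (by linarith)
    have e3 : R ^ 2 + d ^ 2 - R * d * 2 * c ≠ 0 := by intro h; exact hDne (by linarith)
    field_simp
    linear_combination ((1)*d^8 + (-8)*R*d^7*c + (4)*R^2*d^4*w^2 + (8)*R^2*d^5*s*w + (-4)*R^2*d^6 + (28)*R^2*d^6*c^2 + (-48)*R^3*d^4*c*s*w + (32)*R^3*d^5*c + (-56)*R^3*d^5*c^3 + (-8)*R^4*d^2*w^2 + (-32)*R^4*d^2*c^2*w^2 + (-16)*R^4*d^3*s*w + (96)*R^4*d^3*c^2*s*w + (6)*R^4*d^4 + (-88)*R^4*d^4*c^2 + (64)*R^4*d^4*c^4 + (32)*R^5*d*c^3*w^2 + (48)*R^5*d^2*c*s*w + (-64)*R^5*d^2*c^3*s*w + (-24)*R^5*d^3*c + (96)*R^5*d^3*c^3 + (-32)*R^5*d^3*c^5 + (4)*R^6*w^2 + (8)*R^6*d*s*w + (-32)*R^6*d*c^2*s*w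 + (-4)*R^6*d^2 + (28)*R^6*d^2*c^2 + (-32)*R^6*d^2*c^4 + (-8)*R^7*d*c^3 + (1)*R^8) * hs + ((1)*d^4 + (-2)*R^2*d^2 + (1)*R^4) * hW
  have hG3 : (R^2+d^2)*((R*(2*d*R - (R^2+d^2)*c)/(R^2 - 2*d*R*c + d^2) + d - 2*d)^2+(R*(d^2 - R^2)*s/(R^2 - 2*d*R*c + d^2))^2) - 2*d*R*((R^2*(4*c^3 - 3*c) - 2*d*R*(2*c^2 - 1) + d^2*c)/(R^2+d^2-2*d*R*c))*((R*(2*d*R - (R^2+d^2)*c)/(R^2 - 2*d*R*c + d^2) + d - 2*d)^2-(R*(d^2 - R^2)*s/(R^2 - 2*d*R*c + d^2))^2) - 4*d*R*(s*(R^2*(4*c^2 - 1) - 4*d*R*c + d^2)/(R^2+d^2-2*d*R*c))*((R*(2*d*R - (R^2+d^2)*c)/(R^2 - 2*d*R*c + d^2) + d - 2*d)*(R*(d^2 - R^2)*s/(R^2 - 2*d*R*c + d^2))) = (R^2-d^2)^2 := by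
    have e1 : R ^ 2 + d ^ 2 - R * d * c * 2 ≠ 0 := by intro h; exact hDne (by linarith)
    have e2 : R * (R - d * 2 * c) + d ^ 2 ≠ 0 := by intro h; exact hDne (by linarith)
    have e3 : R ^ 2 + d ^ 2 - R * d * 2 * c ≠ 0 := by intro h; exact hDne (by linarith)
    field_simp
    linear_combination ((5)*R^2*d^8 + (-20)*R^3*d^7*c + (-8)*R^4*d^6 + (24)*R^4*d^6*c^2 + (36)*R^5*d^5*c + (-8)*R^5*d^5*c^3 + (2)*R^6*d^4 + (-48)*R^6*d^4*c^2 + (-12)*R^7*d^3*c + (16)*R^7*d^3*c^3 + (24)*R^8*d^2*c^2 + (-4)*R^9*d*c + (-8)*R^9*d*c^3 + (1)*R^10) * hs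
  have hCS : ((R^2*(4*c^3 - 3*c) - 2*d*R*(2*c^2 - 1) + d^2*c)/(R^2+d^2-2*d*R*c))^2 + (s*(R^2*(4*c^2 - 1) - 4*d*R*c + d^2)/(R^2+d^2-2*d*R*c))^2 = 1 := by
    rw [div_pow, div_pow, ← add_div, div_eq_one_iff_eq (pow_ne_zero 2 hDne)]
    linear_combination ((1)*d^4 + (-2)*R^2*d^2 + (1)*R^4 + (-8)*c*R*d^3 + (8)*c*R^3*d + (24)*c^2*R^2*d^2 + (-8)*c^2*R^4 + (-32)*c^3*R^3*d + (16)*c^4*R^4) * hs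
  set z : ℂ := ⟨((R^2*(4*c^3 - 3*c) - 2*d*R*(2*c^2 - 1) + d^2*c)/(R^2+d^2-2*d*R*c)), (s*(R^2*(4*c^2 - 1) - 4*d*R*c + d^2)/(R^2+d^2-2*d*R*c))⟩ with hz
  have habs : ‖z‖ = 1 := by
    rw [hz, Complex.norm_def, Complex.normSq_mk]
    rw [show ((R^2*(4*c^3 - 3*c) - 2*d*R*(2*c^2 - 1) + d^2*c)/(R^2+d^2-2*d*R*c))*((R^2*(4*c^3 - 3*c) - 2*d*R*(2*c^2 - 1) + d^2*c)/(R^2+d^2-2*d*R*c)) + (s*(R^2*(4*c^2 - 1) - 4*d*R*c + d^2)/(R^2+d^2-2*d*R*c))*(s*(R^2*(4*c^2 - 1) - 4*d*R*c + d^2)/(R^2+d^2-2*d*R*c)) = 1 by linear_combination hCS]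
    exact Real.sqrt_one
  have hzne : z ≠ 0 := by
    intro h; rw [h] at habs; simp at habs
  refine ⟨Complex.arg z / 2, ?_⟩
  have h1 : Real.cos (Complex.arg z / 2) ^ 2 + Real.sin (Complex.arg z / 2) ^ 2 = 1 :=
    Real.cos_sq_add_sin_sq _
  have hre : z.re = ((R^2*(4*c^3 - 3*c) - 2*d*R*(2*c^2 - 1) + d^2*c)/(R^2+d^2-2*d*R*c)) := by rw [hz]
  have him : z.im = (s*(R^2*(4*c^2 - 1) - 4*d*R*c + d^2)/(R^2+d^2-2*d*R*c)) := by rw [hz]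
  have hc2m := Real.cos_two_mul (Complex.arg z / 2)
  rw [show 2 * (Complex.arg z / 2) = Complex.arg z by ring, Complex.cos_arg hzne, habs] at hc2m
  have hs2m := Real.sin_two_mul (Complex.arg z / 2)
  rw [show 2 * (Complex.arg z / 2) = Complex.arg z by ring, Complex.sin_arg, habs] at hs2m
  have hCt : Real.cos (Complex.arg z / 2) ^ 2 - Real.sin (Complex.arg z / 2) ^ 2 = ((R^2*(4*c^3 - 3*c) - 2*d*R*(2*c^2 - 1) + d^2*c)/(R^2+d^2-2*d*R*c)) := by
    linear_combination hre - hc2m - h1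
  have hSt : 2 * Real.cos (Complex.arg z / 2) * Real.sin (Complex.arg z / 2) = (s*(R^2*(4*c^2 - 1) - 4*d*R*c + d^2)/(R^2+d^2-2*d*R*c)) := by
    linear_combination him - hs2m
  intro i
  fin_cases i
  · simp only [Pv, Fin.zero_eta, Fin.mk_one, Fin.reduceFinMk, Matrix.cons_val_zero, Matrix.cons_val_one, Matrix.head_cons, Matrix.cons_val_two, Matrix.tail_cons]
    rw [← hc, ← hsd, ← hwdef]
    rw [div_add_div _ _ (pow_ne_zero 2 hRd) (pow_ne_zero 2 hRd'),
      div_eq_one_iff_eq (mul_ne_zero (pow_ne_zero 2 hRd) (pow_ne_zero 2 hRd'))]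
    linear_combination (R^2+d^2)*((c*(d*c + rIn R d) - w*s + d - 2*d)^2+((d*c + rIn R d)*s + w*c)^2)*h1 - 2*d*R*((c*(d*c + rIn R d) - w*s + d - 2*d)^2-((d*c + rIn R d)*s + w*c)^2)*hCt - 4*d*R*((c*(d*c + rIn R d) - w*s + d - 2*d)*((d*c + rIn R d)*s + w*c))*hSt + hG1
  · simp only [Pv, Fin.zero_eta, Fin.mk_one, Fin.reduceFinMk, Matrix.cons_val_zero, Matrix.cons_val_one, Matrix.head_cons, Matrix.cons_val_two, Matrix.tail_cons]
    rw [← hc, ← hsd, ← hwdef]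
    rw [div_add_div _ _ (pow_ne_zero 2 hRd) (pow_ne_zero 2 hRd'),
      div_eq_one_iff_eq (mul_ne_zero (pow_ne_zero 2 hRd) (pow_ne_zero 2 hRd'))]
    linear_combination (R^2+d^2)*((c*(d*c + rIn R d) + w*s + d - 2*d)^2+((d*c + rIn R d)*s - w*c)^2)*h1 - 2*d*R*((c*(d*c + rIn R d) + w*s + d - 2*d)^2-((d*c + rIn R d)*s - w*c)^2)*hCt - 4*d*R*((c*(d*c + rIn R d) + w*s + d - 2*d)*((d*c + rIn R d)*s - w*c))*hSt + hG2
  · simp only [Pv, Fin.zero_eta, Fin.mk_one, Fin.reduceFinMk, Matrix.cons_val_zero, Matrix.cons_val_one, Matrix.head_cons, Matrix.cons_val_two, Matrix.tail_cons]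
    rw [← hc, ← hsd]
    rw [div_add_div _ _ (pow_ne_zero 2 hRd) (pow_ne_zero 2 hRd'),
      div_eq_one_iff_eq (mul_ne_zero (pow_ne_zero 2 hRd) (pow_ne_zero 2 hRd'))]
    linear_combination (R^2+d^2)*((R*(2*d*R - (R^2+d^2)*c)/(R^2 - 2*d*R*c + d^2) + d - 2*d)^2+(R*(d^2 - R^2)*s/(R^2 - 2*d*R*c + d^2))^2)*h1 - 2*d*R*((R*(2*d*R - (R^2+d^2)*c)/(R^2 - 2*d*R*c + d^2) + d - 2*d)^2-(R*(d^2 - R^2)*s/(R^2 - 2*d*R*c + d^2))^2)*hCt - 4*d*R*((R*(2*d*R - (R^2+d^2)*c)/(R^2 - 2*d*R*c + d^2) + d - 2*d)*(R*(d^2 - R^2)*s/(R^2 - 2*d*R*c + d^2)))*hSt + hG3
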